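/- arXiv:1711.09228 — 3 statements merged into one kernel-verified Lean document; each statement's English description precedes it below -/
import Mathlib

section
/- Let a < b be real numbers and let f : ℝ → ℝ be continuous on [a,b], differentiable on (a,b), with both f and its derivative f' square-integrable on (a,b). Then for every x ∈ [a,b], |f(x)| ≤ (1/(b−a) + 2)^{1/2} · (∫_a^b f(t)² dt)^{1/4} · (∫_a^b f(t)² dt + ∫_a^b f'(t)² dt)^{1/4}. -/
open MeasureTheory Set intervalIntegral

/-- Sobolev inequality on a bounded interval `(a, b)`:
for `f ∈ H¹(a,b)`, `‖f‖_∞ ≤ (1/(b-a) + 2)^(1/2) ‖f‖_{L²}^(1/2) ‖f‖_{H¹}^(1/2)`. -/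
theorem sobolev_inequality_interval
    (a b : ℝ) (hab : a < b) (f f' : ℝ → ℝ)
    (hcont : ContinuousOn f (Set.Icc a b))
    (hderiv : ∀ x ∈ Set.Ioo a b, HasDerivAt f (f' x) x)
    (hf2 : MeasureTheory.IntegrableOn (fun t => f t ^ 2) (Set.Ioo a b))
    (hf'2 : MeasureTheory.IntegrableOn (fun t => f' t ^ 2) (Set.Ioo a b)) :
    ∀ x ∈ Set.Icc a b,
      |f x| ≤ (1 / (b - a) + 2) ^ ((1 : ℝ) / 2) *
        (∫ t in a..b, f t ^ 2) ^ ((1 : ℝ) / 4) *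
        ((∫ t in a..b, f t ^ 2) + ∫ t in a..b, f' t ^ 2) ^ ((1 : ℝ) / 4) := by
  intro x hx
  set μ : Measure ℝ := volume.restrict (Set.Ioo a b) with hμ
  set I := ∫ t in a..b, f t ^ 2 with hIdef
  set J := ∫ t in a..b, f' t ^ 2 with hJdef
  have hI : 0 ≤ I := intervalIntegral.integral_nonneg hab.le fun t _ => sq_nonneg _
  have hJ : 0 ≤ J := intervalIntegral.integral_nonneg hab.le fun t _ => sq_nonneg _
  -- measurability
  have hmf : AEStronglyMeasurable f μ :=
    (hcont.mono Set.Ioo_subset_Icc_self).aestronglyMeasurable measurableSet_Ioo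
  have hmf' : AEStronglyMeasurable f' μ := by
    refine (measurable_deriv f).aestronglyMeasurable.congr ?_
    filter_upwards [ae_restrict_mem measurableSet_Ioo] with t ht
    exact (hderiv t ht).deriv
  -- conversion interval integral ↔ μ-integral
  have hIμ : I = ∫ t, f t ^ 2 ∂μ := by
    rw [hIdef, intervalIntegral.integral_of_le hab.le, integral_Ioc_eq_integral_Ioo]
  have hJμ : J = ∫ t, f' t ^ 2 ∂μ := by
    rw [hJdef, intervalIntegral.integral_of_le hab.le, integral_Ioc_eq_integral_Ioo]
  -- Cauchy–Schwarz
  have hCS : ∫ t, |f t * f' t| ∂μ ≤ Real.sqrt I * Real.sqrt J := by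
    have hpq : Real.HolderConjugate 2 2 := Real.HolderConjugate.two_two
    have hLf : MemLp f (ENNReal.ofReal 2) μ := by
      rw [show ENNReal.ofReal 2 = 2 by simp]
      exact (memLp_two_iff_integrable_sq hmf).2 hf2
    have hLf' : MemLp f' (ENNReal.ofReal 2) μ := by
      rw [show ENNReal.ofReal 2 = 2 by simp]
      exact (memLp_two_iff_integrable_sq hmf').2 hf'2
    have := MeasureTheory.integral_mul_norm_le_Lp_mul_Lq hpq hLf hLf'
    simp only [Real.norm_eq_abs] at this
    have h2 : ∀ u : ℝ, |u| ^ (2:ℝ) = u ^ 2 := fun u => by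
      rw [show (2:ℝ) = ((2:ℕ):ℝ) by norm_num, Real.rpow_natCast, sq_abs]
    simp only [h2] at this
    calc ∫ t, |f t * f' t| ∂μ = ∫ t, |f t| * |f' t| ∂μ := by
          simp_rw [abs_mul]
      _ ≤ (∫ t, f t ^ 2 ∂μ) ^ ((1:ℝ)/2) * (∫ t, f' t ^ 2 ∂μ) ^ ((1:ℝ)/2) := by
          simpa using this
      _ = Real.sqrt I * Real.sqrt J := by
          rw [hIμ, hJμ, Real.sqrt_eq_rpow, Real.sqrt_eq_rpow]
  -- integrability of 2 f f'
  have hint : IntervalIntegrable (fun t => 2 * (f t * f' t)) volume a b := by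
    have hmeas : AEStronglyMeasurable (fun t => 2 * (f t * f' t)) μ :=
      (aestronglyMeasurable_const.mul (hmf.mul hmf'))
    have hIoo : IntegrableOn (fun t => 2 * (f t * f' t)) (Set.Ioo a b) := by
      refine (hf2.add hf'2).mono' hmeas ?_
      refine Filter.Eventually.of_forall fun t => ?_
      have h1 : 2 * (|f t| * |f' t|) ≤ f t ^ 2 + f' t ^ 2 := by
        nlinarith [sq_nonneg (|f t| - |f' t|), abs_nonneg (f t), abs_nonneg (f' t),
          sq_abs (f t), sq_abs (f' t)]
      simpa [Real.norm_eq_abs, abs_mul] using h1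
    rw [intervalIntegrable_iff_integrableOn_Ioo_of_le hab.le]
    exact hIoo
  -- FTC on subintervals
  have ftc : ∀ u v, a ≤ u → u ≤ v → v ≤ b →
      ∫ t in u..v, 2 * (f t * f' t) = f v ^ 2 - f u ^ 2 := by
    intro u v hau huv hvb
    refine intervalIntegral.integral_eq_sub_of_hasDerivAt_of_le huv
      ((hcont.pow 2).mono (Set.Icc_subset_Icc hau hvb)) ?_
      (hint.mono_set ?_)
    · intro t ht
      have ht' : t ∈ Set.Ioo a b := ⟨hau.trans_lt ht.1, ht.2.trans_le hvb⟩
      have := (hderiv t ht').pow 2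
      simpa [mul_comm, mul_assoc, mul_left_comm] using this
    · rw [Set.uIcc_of_le huv, Set.uIcc_of_le hab.le]
      exact Set.Icc_subset_Icc hau hvb
  -- bound for the integral of |2 f f'| over any subinterval
  have habs : ∀ u v, a ≤ u → u ≤ v → v ≤ b →
      |∫ t in u..v, 2 * (f t * f' t)| ≤ 2 * (Real.sqrt I * Real.sqrt J) := by
    intro u v hau huv hvb
    calc |∫ t in u..v, 2 * (f t * f' t)|
        ≤ ∫ t in u..v, |2 * (f t * f' t)| :=
          intervalIntegral.abs_integral_le_integral_abs huv
      _ ≤ ∫ t in a..b, |2 * (f t * f' t)| := by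
          refine intervalIntegral.integral_mono_interval hau huv hvb ?_ hint.abs
          exact Filter.Eventually.of_forall fun t => abs_nonneg _
      _ = 2 * ∫ t, |f t * f' t| ∂μ := by
          rw [intervalIntegral.integral_of_le hab.le, integral_Ioc_eq_integral_Ioo]
          simp_rw [abs_mul, abs_two]
          rw [MeasureTheory.integral_const_mul]
      _ ≤ 2 * (Real.sqrt I * Real.sqrt J) := by linarith [hCS]
  -- a point where f² is at most its average
  obtain ⟨y, hy, hmin⟩ := isCompact_Icc.exists_isMinOn (Set.nonempty_Icc.2 hab.le)
    ((hcont.pow 2) : ContinuousOn (fun t => f t ^ 2) (Set.Icc a b))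
  have hyavg : (b - a) * f y ^ 2 ≤ I := by
    have h1 : ∫ t in a..b, f y ^ 2 ≤ ∫ t in a..b, f t ^ 2 := by
      refine intervalIntegral.integral_mono_on hab.le intervalIntegrable_const ?_
        fun t ht => hmin ht
      refine ContinuousOn.intervalIntegrable ?_
      rw [Set.uIcc_of_le hab.le]
      exact hcont.pow 2
    calc (b - a) * f y ^ 2 = ∫ t in a..b, f y ^ 2 := by simp [mul_comm]
      _ ≤ I := h1
  -- key pointwise bound for f x ^ 2
  have hdiff : |f x ^ 2 - f y ^ 2| ≤ 2 * (Real.sqrt I * Real.sqrt J) := by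
    rcases le_total y x with h | h
    · rw [← ftc y x hy.1 h hx.2]
      exact habs y x hy.1 h hx.2
    · rw [show f x ^ 2 - f y ^ 2 = -(f y ^ 2 - f x ^ 2) by ring, abs_neg, ← ftc x y hx.1 h hy.2]
      exact habs x y hx.1 h hy.2
  have hba : (0:ℝ) < b - a := sub_pos.2 hab
  have hkey : f x ^ 2 ≤ I / (b - a) + 2 * (Real.sqrt I * Real.sqrt J) := by
    have h1 : f y ^ 2 ≤ I / (b - a) := by
      rw [le_div_iff₀ hba]; linarith [hyavg]
    have h2 : f x ^ 2 - f y ^ 2 ≤ |f x ^ 2 - f y ^ 2| := le_abs_self _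
    linarith
  -- replace √J by √(I+J), I by √I √(I+J)
  have hsI : Real.sqrt I ≤ Real.sqrt (I + J) :=
    Real.sqrt_le_sqrt (by linarith)
  have hsJ : Real.sqrt J ≤ Real.sqrt (I + J) :=
    Real.sqrt_le_sqrt (by linarith)
  have hII : I = Real.sqrt I * Real.sqrt I := (Real.mul_self_sqrt hI).symm
  have hC : (0:ℝ) < 1 / (b - a) + 2 := by positivity
  have hkey2 : f x ^ 2 ≤ (1 / (b - a) + 2) * (Real.sqrt I * Real.sqrt (I + J)) := by
    have h1 : I ≤ Real.sqrt I * Real.sqrt (I + J) := by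
      calc I = Real.sqrt I * Real.sqrt I := hII
        _ ≤ _ := mul_le_mul_of_nonneg_left hsI (Real.sqrt_nonneg I)
    have h2 : Real.sqrt I * Real.sqrt J ≤ Real.sqrt I * Real.sqrt (I + J) :=
      mul_le_mul_of_nonneg_left hsJ (Real.sqrt_nonneg I)
    have h3 : I / (b - a) ≤ (1 / (b - a)) * (Real.sqrt I * Real.sqrt (I + J)) := by
      rw [div_le_iff₀ hba, mul_assoc]
      rw [div_mul_eq_mul_div, le_div_iff₀ hba] at *
      nlinarith [h1]
    nlinarith [hkey, h2, h3]
  -- final algebra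
  have h1 : |f x| = Real.sqrt (f x ^ 2) := (Real.sqrt_sq_eq_abs (f x)).symm
  rw [h1]
  have h2 : Real.sqrt (f x ^ 2) ≤
      Real.sqrt ((1 / (b - a) + 2) * (Real.sqrt I * Real.sqrt (I + J))) :=
    Real.sqrt_le_sqrt hkey2
  refine h2.trans_eq ?_
  rw [Real.sqrt_mul hC.le, Real.sqrt_mul (Real.sqrt_nonneg I)]
  rw [Real.sqrt_eq_rpow, Real.sqrt_eq_rpow, Real.sqrt_eq_rpow, Real.sqrt_eq_rpow,
    Real.sqrt_eq_rpow, ← Real.rpow_mul hI, ← Real.rpow_mul (by positivity : (0:ℝ) ≤ I + J)]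
  norm_num
  ring
end

section
/- Let f : ℝ → ℝ be continuous on [0, x] for some x > 0 and let μ > 0 and ν > 0 be real. Then (1/Γ(μ)) ∫_0^x (x−s)^{μ−1} · ((1/Γ(ν)) ∫_0^s (s−t)^{ν−1} f(t) dt) ds = (1/Γ(μ+ν)) ∫_0^x (x−t)^{μ+ν−1} f(t) dt, i.e. J^μ(J^ν f)(x) = J^{μ+ν} f(x). -/
open MeasureTheory Set Convolution ContinuousLinearMap


lemma rl_beta {μ ν : ℝ} (hμ : 0 < μ) (hν : 0 < ν) :
    ∫ t in (0:ℝ)..1, t ^ (μ - 1) * (1 - t) ^ (ν - 1) =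
      Real.Gamma μ * Real.Gamma ν / Real.Gamma (μ + ν) := by
  have key := Complex.Gamma_mul_Gamma_eq_betaIntegral
    (s := (μ : ℂ)) (t := (ν : ℂ)) (by simpa using hμ) (by simpa using hν)
  have hbeta : Complex.betaIntegral (μ : ℂ) (ν : ℂ) =
      ((∫ t in (0:ℝ)..1, t ^ (μ - 1) * (1 - t) ^ (ν - 1) : ℝ) : ℂ) := by
    rw [Complex.betaIntegral, ← intervalIntegral.integral_ofReal]
    refine intervalIntegral.integral_congr fun t ht => ?_
    rw [uIcc_of_le zero_le_one] at ht
    push_cast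
    rw [Complex.ofReal_cpow ht.1, Complex.ofReal_cpow (by linarith [ht.2] : (0:ℝ) ≤ 1 - t)]
    push_cast
    ring
  rw [hbeta] at key
  have hG : Real.Gamma (μ + ν) ≠ 0 := (Real.Gamma_pos_of_pos (by linarith)).ne'
  have : ((Real.Gamma μ * Real.Gamma ν : ℝ) : ℂ) =
      ((Real.Gamma (μ + ν) * ∫ t in (0:ℝ)..1, t ^ (μ - 1) * (1 - t) ^ (ν - 1) : ℝ) : ℂ) := by
    rw [Complex.ofReal_mul, Complex.ofReal_mul, ← Complex.Gamma_ofReal, ← Complex.Gamma_ofReal,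
      ← Complex.Gamma_ofReal, Complex.ofReal_add]
    exact key
  have h2 := Complex.ofReal_inj.1 this
  field_simp
  linarith [h2]

noncomputable def rlk (x μ : ℝ) : ℝ → ℝ := Set.indicator (Set.Ioc 0 x) (fun t => t ^ (μ - 1))

lemma rlk_int {x μ : ℝ} (hx : 0 < x) (hμ : 0 < μ) : Integrable (rlk x μ) := by
  rw [rlk, integrable_indicator_iff measurableSet_Ioc]
  rw [← intervalIntegrable_iff_integrableOn_Ioc_of_le hx.le]
  exact intervalIntegral.intervalIntegrable_rpow' (by linarith)

-- convolution of two Ioc-indicator-supported functions vanishes at nonpositive points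
lemma rl_conv_nonpos {x : ℝ} (g h : ℝ → ℝ) {y : ℝ} (hy : y ≤ 0) :
    ((Set.indicator (Set.Ioc 0 x) g) ⋆[ContinuousLinearMap.mul ℝ ℝ]
      (Set.indicator (Set.Ioc 0 x) h)) y = 0 := by
  rw [convolution_def]
  have : ∀ t : ℝ, (ContinuousLinearMap.mul ℝ ℝ) (Set.indicator (Set.Ioc 0 x) g t)
      (Set.indicator (Set.Ioc 0 x) h (y - t)) = 0 := by
    intro t
    simp only [ContinuousLinearMap.mul_apply']
    by_cases ht : t ∈ Set.Ioc 0 x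
    · have : y - t ∉ Set.Ioc 0 x := by
        simp only [Set.mem_Ioc, not_and_or, not_lt]
        left; linarith [ht.1]
      rw [Set.indicator_of_notMem this, mul_zero]
    · rw [Set.indicator_of_notMem ht, zero_mul]
  simp only [this, integral_zero]

lemma rl_scaled {μ ν u : ℝ} (hμ : 0 < μ) (hν : 0 < ν) (hu : 0 < u) :
    ∫ t in (0:ℝ)..u, t ^ (μ - 1) * (u - t) ^ (ν - 1) =
      u ^ (μ + ν - 1) * ∫ t in (0:ℝ)..1, t ^ (μ - 1) * (1 - t) ^ (ν - 1) := by
  have h := intervalIntegral.integral_comp_mul_right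
    (a := (0:ℝ)) (b := 1) (fun t => t ^ (μ - 1) * (u - t) ^ (ν - 1)) hu.ne'
  simp only [zero_mul, one_mul, smul_eq_mul] at h
  have h2 : ∫ (t : ℝ) in (0:ℝ)..1, (t * u) ^ (μ - 1) * (u - t * u) ^ (ν - 1) =
      ∫ (t : ℝ) in (0:ℝ)..1, (u ^ (μ - 1) * u ^ (ν - 1)) * (t ^ (μ - 1) * (1 - t) ^ (ν - 1)) := by
    refine intervalIntegral.integral_congr fun t ht => ?_
    rw [uIcc_of_le zero_le_one] at ht
    have h1t : (0:ℝ) ≤ 1 - t := by linarith [ht.2]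
    rw [show u - t * u = (1 - t) * u by ring,
      Real.mul_rpow ht.1 hu.le, Real.mul_rpow h1t hu.le]
    ring
  rw [h2, intervalIntegral.integral_const_mul] at h
  have := congrArg (fun z => u * z) h
  simp only [← mul_assoc] at this
  rw [mul_inv_cancel₀ hu.ne', one_mul] at this
  rw [← this]
  rw [show μ + ν - 1 = 1 + (μ - 1) + (ν - 1) by ring, Real.rpow_add hu, Real.rpow_add hu,
    Real.rpow_one]


lemma rl_inner_eval {x ν : ℝ} (f : ℝ → ℝ) {s : ℝ} (hs : s ∈ Set.Ioo 0 x) :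
    ((rlk x ν) ⋆[ContinuousLinearMap.mul ℝ ℝ] (Set.indicator (Set.Ioc 0 x) f)) s =
      ∫ t in (0:ℝ)..s, (s - t) ^ (ν - 1) * f t := by
  obtain ⟨hs1, hs2⟩ := hs
  rw [convolution_eq_swap]
  have heq : ∀ t : ℝ, (ContinuousLinearMap.mul ℝ ℝ) (rlk x ν (s - t))
      (Set.indicator (Set.Ioc 0 x) f t)
      = Set.indicator (Set.Ioo 0 s) (fun t => (s - t) ^ (ν - 1) * f t) t := by
    intro t
    simp only [ContinuousLinearMap.mul_apply', rlk, Set.indicator_apply, Set.mem_Ioc,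
      Set.mem_Ioo]
    by_cases h1 : 0 < t
    · by_cases h2 : t < s
      · rw [if_pos (⟨by linarith, by linarith⟩ : 0 < s - t ∧ s - t ≤ x),
          if_pos (⟨h1, by linarith⟩ : 0 < t ∧ t ≤ x), if_pos ⟨h1, h2⟩]
      · rw [if_neg (fun h : 0 < s - t ∧ s - t ≤ x => h2 (by linarith [h.1])), zero_mul,
          if_neg (fun h : 0 < t ∧ t < s => h2 h.2)]
    · rw [if_neg (fun h : 0 < t ∧ t ≤ x => h1 h.1), mul_zero,
        if_neg (fun h : 0 < t ∧ t < s => h1 h.1)]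
  simp only [heq]
  rw [integral_indicator measurableSet_Ioo, ← integral_Ioc_eq_integral_Ioo,
    ← intervalIntegral.integral_of_le hs1.le]

lemma rl_kernel_eval {x μ ν : ℝ} (hμ : 0 < μ) (hν : 0 < ν) {u : ℝ} (hu : u ∈ Set.Ioc 0 x) :
    ((rlk x μ) ⋆[ContinuousLinearMap.mul ℝ ℝ] (rlk x ν)) u =
      u ^ (μ + ν - 1) * ∫ t in (0:ℝ)..1, t ^ (μ - 1) * (1 - t) ^ (ν - 1) := by
  obtain ⟨hu1, hu2⟩ := hu
  rw [convolution_def]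
  have heq : ∀ t : ℝ, (ContinuousLinearMap.mul ℝ ℝ) (rlk x μ t) (rlk x ν (u - t))
      = Set.indicator (Set.Ioo 0 u) (fun t => t ^ (μ - 1) * (u - t) ^ (ν - 1)) t := by
    intro t
    simp only [ContinuousLinearMap.mul_apply', rlk, Set.indicator_apply, Set.mem_Ioc,
      Set.mem_Ioo]
    by_cases h1 : 0 < t
    · by_cases h2 : t < u
      · rw [if_pos (⟨h1, by linarith⟩ : 0 < t ∧ t ≤ x),
          if_pos (⟨by linarith, by linarith⟩ : 0 < u - t ∧ u - t ≤ x), if_pos ⟨h1, h2⟩]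
      · rw [if_neg (fun h : 0 < u - t ∧ u - t ≤ x => h2 (by linarith [h.1])), mul_zero,
          if_neg (fun h : 0 < t ∧ t < u => h2 h.2)]
    · rw [if_neg (fun h : 0 < t ∧ t ≤ x => h1 h.1), zero_mul,
        if_neg (fun h : 0 < t ∧ t < u => h1 h.1)]
  simp only [heq]
  rw [integral_indicator measurableSet_Ioo, ← integral_Ioc_eq_integral_Ioo,
    ← intervalIntegral.integral_of_le hu1.le]
  exact rl_scaled hμ hν hu1

lemma rlk_def (x μ : ℝ) : rlk x μ = Set.indicator (Set.Ioc 0 x) (fun t => t ^ (μ - 1)) := rfl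

lemma rl_outer_lhs {x μ ν : ℝ} (f : ℝ → ℝ) (hx : 0 < x) :
    ((rlk x μ) ⋆[ContinuousLinearMap.mul ℝ ℝ]
        ((rlk x ν) ⋆[ContinuousLinearMap.mul ℝ ℝ] (Set.indicator (Set.Ioc 0 x) f))) x =
      ∫ s in (0:ℝ)..x, (x - s) ^ (μ - 1) * ∫ t in (0:ℝ)..s, (s - t) ^ (ν - 1) * f t := by
  set G := (rlk x ν) ⋆[ContinuousLinearMap.mul ℝ ℝ] (Set.indicator (Set.Ioc 0 x) f) with hG
  rw [convolution_eq_swap]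
  have heq : ∀ s : ℝ, (ContinuousLinearMap.mul ℝ ℝ) (rlk x μ (x - s)) (G s)
      = Set.indicator (Set.Ioo 0 x)
          (fun s => (x - s) ^ (μ - 1) * ∫ t in (0:ℝ)..s, (s - t) ^ (ν - 1) * f t) s := by
    intro s
    simp only [ContinuousLinearMap.mul_apply', rlk_def, Set.indicator_apply, Set.mem_Ioc,
      Set.mem_Ioo]
    by_cases h1 : 0 < s
    · by_cases h2 : s < x
      · rw [if_pos (⟨by linarith, by linarith⟩ : 0 < x - s ∧ x - s ≤ x), if_pos ⟨h1, h2⟩, hG,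
          rl_inner_eval f ⟨h1, h2⟩]
      · rw [if_neg (fun h : 0 < x - s ∧ x - s ≤ x => h2 (by linarith [h.1])), zero_mul,
          if_neg (fun h : 0 < s ∧ s < x => h2 h.2)]
    · have hG0 : G s = 0 := by
        rw [hG, rlk_def]
        exact rl_conv_nonpos _ _ (not_lt.1 h1)
      rw [hG0, mul_zero, if_neg (fun h : 0 < s ∧ s < x => h1 h.1)]
  simp only [heq]
  rw [integral_indicator measurableSet_Ioo, ← integral_Ioc_eq_integral_Ioo,
    ← intervalIntegral.integral_of_le hx.le]

lemma rl_outer_rhs {x μ ν : ℝ} (f : ℝ → ℝ) (hx : 0 < x) (hμ : 0 < μ) (hν : 0 < ν) :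
    (((rlk x μ) ⋆[ContinuousLinearMap.mul ℝ ℝ] (rlk x ν)) ⋆[ContinuousLinearMap.mul ℝ ℝ]
        (Set.indicator (Set.Ioc 0 x) f)) x =
      (∫ t in (0:ℝ)..1, t ^ (μ - 1) * (1 - t) ^ (ν - 1)) *
        ∫ t in (0:ℝ)..x, (x - t) ^ (μ + ν - 1) * f t := by
  set K := (rlk x μ) ⋆[ContinuousLinearMap.mul ℝ ℝ] (rlk x ν) with hK
  set B := ∫ t in (0:ℝ)..1, t ^ (μ - 1) * (1 - t) ^ (ν - 1) with hB
  rw [convolution_eq_swap]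
  have heq : ∀ t : ℝ, (ContinuousLinearMap.mul ℝ ℝ) (K (x - t))
      (Set.indicator (Set.Ioc 0 x) f t)
      = Set.indicator (Set.Ioo 0 x) (fun t => B * ((x - t) ^ (μ + ν - 1) * f t)) t := by
    intro t
    simp only [ContinuousLinearMap.mul_apply', Set.indicator_apply, Set.mem_Ioc, Set.mem_Ioo]
    by_cases h1 : 0 < t
    · by_cases h2 : t < x
      · rw [if_pos (⟨h1, h2.le⟩ : 0 < t ∧ t ≤ x), if_pos ⟨h1, h2⟩, hK,
          rl_kernel_eval hμ hν (⟨by linarith, by linarith⟩ : x - t ∈ Set.Ioc 0 x)]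
        ring
      · by_cases h3 : t ≤ x
        · have ht : t = x := le_antisymm h3 (not_lt.1 h2)
          have hK0 : K (x - t) = 0 := by
            rw [hK, rlk_def, rlk_def]
            exact rl_conv_nonpos _ _ (by linarith [ht.ge])
          rw [hK0, zero_mul, if_neg (fun h : 0 < t ∧ t < x => h2 h.2)]
        · rw [if_neg (fun h : 0 < t ∧ t ≤ x => h3 h.2), mul_zero,
            if_neg (fun h : 0 < t ∧ t < x => h2 h.2)]
    · rw [if_neg (fun h : 0 < t ∧ t ≤ x => h1 h.1), mul_zero,
        if_neg (fun h : 0 < t ∧ t < x => h1 h.1)]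
  simp only [heq]
  rw [integral_indicator measurableSet_Ioo, ← integral_Ioc_eq_integral_Ioo,
    ← intervalIntegral.integral_of_le hx.le, intervalIntegral.integral_const_mul]

/-- Semigroup property of Riemann–Liouville fractional integrals:
`J^μ (J^ν f) (x) = J^(μ+ν) f (x)`. -/
theorem fractional_integral_semigroup
    (f : ℝ → ℝ) (x : ℝ) (hx : 0 < x) (hf : ContinuousOn f (Set.Icc 0 x))
    (μ ν : ℝ) (hμ : 0 < μ) (hν : 0 < ν) :
    (1 / Real.Gamma μ) * ∫ s in (0 : ℝ)..x, (x - s) ^ (μ - 1) *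
        ((1 / Real.Gamma ν) * ∫ t in (0 : ℝ)..s, (s - t) ^ (ν - 1) * f t) =
      (1 / Real.Gamma (μ + ν)) * ∫ t in (0 : ℝ)..x, (x - t) ^ (μ + ν - 1) * f t := by
  set L := ContinuousLinearMap.mul ℝ ℝ with hL
  set F₀ : ℝ → ℝ := Set.indicator (Set.Ioc 0 x) f with hF₀
  have hμi : Integrable (rlk x μ) := rlk_int hx hμ
  have hνi : Integrable (rlk x ν) := rlk_int hx hν
  have hfi : Integrable F₀ := by
    rw [hF₀, integrable_indicator_iff measurableSet_Ioc]
    exact (hf.integrableOn_Icc).mono_set Set.Ioc_subset_Icc_self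
  -- bound on F₀
  obtain ⟨C, hC⟩ := (isCompact_Icc.exists_bound_of_continuousOn hf)
  set C0 : ℝ := max C 0 with hC0
  have hF0bdd : ∀ t, ‖F₀ t‖ ≤ C0 := by
    intro t
    rw [hF₀]
    by_cases ht : t ∈ Set.Ioc 0 x
    · rw [Set.indicator_of_mem ht]
      exact le_trans (hC t ⟨ht.1.le, ht.2⟩) (le_max_left _ _)
    · rw [Set.indicator_of_notMem ht, norm_zero]
      exact le_max_right _ _
  -- the norm convolution H and its bound
  set H : ℝ → ℝ := (fun s => ‖rlk x ν s‖) ⋆[ContinuousLinearMap.mul ℝ ℝ]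
    (fun s => ‖F₀ s‖) with hH
  have hHi : Integrable H :=
    ((hνi.norm.convolution_integrand (ContinuousLinearMap.mul ℝ ℝ)
      hfi.norm)).integral_prod_left
  have hHbdd : ∀ y, ‖H y‖ ≤ (∫ s, ‖rlk x ν s‖) * C0 := by
    intro y
    have h1 : H y = ∫ s, ‖rlk x ν s‖ * ‖F₀ (y - s)‖ := by
      rw [hH, convolution_def]
      simp only [ContinuousLinearMap.mul_apply']
    have h2 : 0 ≤ H y := by
      rw [h1]
      exact integral_nonneg fun s => mul_nonneg (norm_nonneg _) (norm_nonneg _)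
    rw [Real.norm_of_nonneg h2, h1]
    calc ∫ s, ‖rlk x ν s‖ * ‖F₀ (y - s)‖
        ≤ ∫ s, ‖rlk x ν s‖ * C0 := by
          refine integral_mono_of_nonneg
            (Filter.Eventually.of_forall fun s => mul_nonneg (norm_nonneg _) (norm_nonneg _))
            (hνi.norm.mul_const C0) (Filter.Eventually.of_forall fun s => ?_)
          exact mul_le_mul_of_nonneg_left (hF0bdd _) (norm_nonneg _)
      _ = (∫ s, ‖rlk x ν s‖) * C0 := integral_mul_const _ _
  -- associativity
  have hfg : ∀ᵐ y, ConvolutionExistsAt (rlk x μ) (rlk x ν) y L :=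
    hμi.ae_convolution_exists L hνi
  have hgk : ∀ᵐ y, ConvolutionExistsAt (fun s => ‖rlk x ν s‖) (fun s => ‖F₀ s‖) y
      (ContinuousLinearMap.mul ℝ ℝ) :=
    hνi.norm.ae_convolution_exists (ContinuousLinearMap.mul ℝ ℝ) hfi.norm
  have hfgk : ConvolutionExistsAt (fun s => ‖rlk x μ s‖) H x
      (ContinuousLinearMap.mul ℝ ℝ) := by
    rw [ConvolutionExistsAt]
    have hm : AEStronglyMeasurable (fun t => H (x - t)) volume :=
      ((integrable_comp_sub_left H x).2 hHi).aestronglyMeasurable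
    have key : Integrable (fun t => H (x - t) * ‖rlk x μ t‖) :=
      Integrable.bdd_mul (c := (∫ s, ‖rlk x ν s‖) * C0) hμi.norm hm
        (Filter.Eventually.of_forall fun t => hHbdd (x - t))
    simpa [ContinuousLinearMap.mul_apply', mul_comm] using key
  have hassoc := convolution_assoc (L := L) (L₂ := L) (L₃ := L) (L₄ := L)
    (fun a b c => mul_assoc a b c) (x₀ := x)
    hμi.aestronglyMeasurable hνi.aestronglyMeasurable hfi.aestronglyMeasurable
    hfg hgk hfgk
  -- rewrite both sides
  rw [rl_outer_lhs f hx, rl_outer_rhs f hx hμ hν] at hassoc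
  have hGμ : Real.Gamma μ ≠ 0 := (Real.Gamma_pos_of_pos hμ).ne'
  have hGν : Real.Gamma ν ≠ 0 := (Real.Gamma_pos_of_pos hν).ne'
  have hGμν : Real.Gamma (μ + ν) ≠ 0 := (Real.Gamma_pos_of_pos (by linarith)).ne'
  rw [show (∫ s in (0:ℝ)..x, (x - s) ^ (μ - 1) *
        ((1 / Real.Gamma ν) * ∫ t in (0:ℝ)..s, (s - t) ^ (ν - 1) * f t)) =
      ∫ s in (0:ℝ)..x, (1 / Real.Gamma ν) *
        ((x - s) ^ (μ - 1) * ∫ t in (0:ℝ)..s, (s - t) ^ (ν - 1) * f t) from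
    intervalIntegral.integral_congr (fun s _ => by ring),
    intervalIntegral.integral_const_mul, ← hassoc, rl_beta hμ hν]
  field_simp
end

section
/- Let m ≥ 1 be a natural number, α real with m − 1 < α < m, and let f : ℝ → ℝ be m-times continuously differentiable on [0,1]. Then for every x ∈ (0,1], (1/Γ(α)) ∫_0^x (x−s)^{α−1} · ((1/Γ(m−α)) ∫_0^s (s−t)^{m−α−1} f^{(m)}(t) dt) ds = f(x) − ∑_{k=0}^{m−1} f^{(k)}(0) · x^k / k!. -/
open MeasureTheory Set intervalIntegral


open MeasureTheory Set

lemma real_beta {a b : ℝ} (ha : 0 < a) (hb : 0 < b) :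
    ∫ v in (0:ℝ)..1, v ^ (b - 1) * (1 - v) ^ (a - 1)
      = Real.Gamma a * Real.Gamma b / Real.Gamma (a + b) := by
  have h := Complex.Gamma_mul_Gamma_eq_betaIntegral (s := (b:ℂ)) (t := (a:ℂ))
    (by simpa using hb) (by simpa using ha)
  have hcoe : Complex.betaIntegral (b:ℂ) (a:ℂ)
      = ((∫ v in (0:ℝ)..1, v ^ (b-1) * (1 - v) ^ (a-1) : ℝ) : ℂ) := by
    rw [Complex.betaIntegral, ← intervalIntegral.integral_ofReal]
    refine intervalIntegral.integral_congr fun v hv => ?_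
    rw [Set.uIcc_of_le zero_le_one] at hv
    push_cast
    rw [Complex.ofReal_cpow hv.1, Complex.ofReal_cpow (by linarith [hv.2] : (0:ℝ) ≤ 1 - v)]
    push_cast
    ring
  rw [hcoe, show ((b:ℂ) + (a:ℂ)) = ((a + b : ℝ) : ℂ) by push_cast; ring] at h
  simp only [Complex.Gamma_ofReal, ← Complex.ofReal_mul] at h
  have h2 : Real.Gamma b * Real.Gamma a
      = Real.Gamma (a + b) * ∫ v in (0:ℝ)..1, v ^ (b-1) * (1 - v) ^ (a-1) :=
    Complex.ofReal_injective h
  have hne : Real.Gamma (a + b) ≠ 0 := (Real.Gamma_pos_of_pos (by linarith)).ne'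
  field_simp
  linarith [h2]

lemma kernel_eval {a b : ℝ} (ha : 0 < a) (hb : 0 < b) {x t : ℝ} (ht : t < x) :
    ∫ s in t..x, (x - s) ^ (a - 1) * (s - t) ^ (b - 1)
      = (x - t) ^ (a + b - 1) * (Real.Gamma a * Real.Gamma b / Real.Gamma (a + b)) := by
  set c : ℝ := x - t with hc
  have hc0 : 0 < c := by simp [hc]; linarith
  have hsub := intervalIntegral.integral_comp_mul_add
    (a := (0:ℝ)) (b := 1) (fun s => (x - s) ^ (a - 1) * (s - t) ^ (b - 1)) hc0.ne' t
  simp only [mul_zero, zero_add, mul_one] at hsub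
  rw [show c + t = x by simp [hc]] at hsub
  have heq : (∫ v in (0:ℝ)..1, (x - (c * v + t)) ^ (a - 1) * (c * v + t - t) ^ (b - 1))
      = (c ^ (a-1) * c ^ (b-1)) * ∫ v in (0:ℝ)..1, v ^ (b - 1) * (1 - v) ^ (a - 1) := by
    rw [← intervalIntegral.integral_const_mul]
    refine intervalIntegral.integral_congr fun v hv => ?_
    rw [Set.uIcc_of_le zero_le_one] at hv
    have h1 : x - (c * v + t) = c * (1 - v) := by simp [hc]; ring
    have h2 : c * v + t - t = c * v := by ring
    rw [h1, h2, Real.mul_rpow hc0.le (by linarith [hv.2]), Real.mul_rpow hc0.le hv.1]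
    ring
  rw [heq] at hsub
  have h3 := congrArg (fun z => c • z) hsub
  simp only [smul_eq_mul, ← mul_assoc, mul_inv_cancel₀ hc0.ne', one_mul] at h3
  rw [← h3, real_beta ha hb]
  have hp : c * (c ^ (a-1) * c ^ (b-1)) = c ^ (a + b - 1) := by
    nth_rewrite 1 [← Real.rpow_one c]
    rw [← Real.rpow_add hc0, ← Real.rpow_add hc0]
    ring_nf
  rw [← hp]; ring


lemma hasDerivAt_iter (n : ℕ) (f : ℝ → ℝ) (hf : ContDiffOn ℝ (n+1) f (Icc 0 1))
    {t : ℝ} (ht : t ∈ Ioo (0:ℝ) 1) :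
    HasDerivAt (iteratedDerivWithin n f (Icc 0 1))
      (iteratedDerivWithin (n+1) f (Icc 0 1) t) t := by
  have hU : UniqueDiffOn ℝ (Icc (0:ℝ) 1) := uniqueDiffOn_Icc one_pos
  have hd := hf.differentiableOn_iteratedDerivWithin (m := n)
    (by exact_mod_cast Nat.lt_succ_self n) hU
  have h1 := (hd t (Ioo_subset_Icc_self ht)).hasDerivWithinAt
  have h2 := h1.hasDerivAt (Icc_mem_nhds ht.1 ht.2)
  rw [iteratedDerivWithin_succ]
  exact h2

lemma taylor_integral : ∀ (p : ℕ) (f : ℝ → ℝ), ContDiffOn ℝ (p+1) f (Icc 0 1) →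
    ∀ x ∈ Ioc (0:ℝ) 1,
    f x - ∑ k ∈ Finset.range (p+1),
        iteratedDerivWithin k f (Icc 0 1) 0 * x ^ k / k.factorial
      = ∫ t in (0:ℝ)..x, ((x - t) ^ p / p.factorial) *
          iteratedDerivWithin (p+1) f (Icc 0 1) t := by
  have hU : UniqueDiffOn ℝ (Icc (0:ℝ) 1) := uniqueDiffOn_Icc one_pos
  intro p
  induction p with
  | zero =>
    intro f hf x hx
    have hxI : Icc 0 x ⊆ Icc (0:ℝ) 1 := Icc_subset_Icc le_rfl hx.2
    have hg1c : ContinuousOn (iteratedDerivWithin 1 f (Icc 0 1)) (Icc (0:ℝ) 1) :=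
      hf.continuousOn_iteratedDerivWithin le_rfl hU
    have key := integral_eq_sub_of_hasDeriv_right_of_le hx.1.le
      (f' := iteratedDerivWithin 1 f (Icc 0 1)) (hf.continuousOn.mono hxI)
      (fun t ht => by
        have := hasDerivAt_iter 0 f hf ⟨ht.1, lt_of_lt_of_le ht.2 hx.2⟩
        rw [iteratedDerivWithin_zero] at this
        exact this.hasDerivWithinAt)
      (((hg1c.mono hxI).mono (by rw [uIcc_of_le hx.1.le])).intervalIntegrable)
    simp only [Finset.sum_range_one, iteratedDerivWithin_zero, pow_zero,
      Nat.factorial_zero, Nat.cast_one, mul_one, div_one, zero_add]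
    rw [← key]
    refine (intervalIntegral.integral_congr fun t _ => ?_).symm
    simp
  | succ p IH =>
    intro f hf x hx
    have hxI : Icc 0 x ⊆ Icc (0:ℝ) 1 := Icc_subset_Icc le_rfl hx.2
    set gp := iteratedDerivWithin (p+1) f (Icc 0 1) with hgp
    set gq := iteratedDerivWithin (p+2) f (Icc 0 1) with hgq
    have hgpc : ContinuousOn gp (Icc (0:ℝ) 1) :=
      hf.continuousOn_iteratedDerivWithin (by exact_mod_cast Nat.le_succ (p+1)) hU
    have hgqc : ContinuousOn gq (Icc (0:ℝ) 1) :=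
      hf.continuousOn_iteratedDerivWithin le_rfl hU
    have hfacne : ((p+1).factorial : ℝ) ≠ 0 := by positivity
    have hfacne' : ((p).factorial : ℝ) ≠ 0 := by positivity
    -- derivative of H
    have hderiv : ∀ t ∈ Ioo 0 x,
        HasDerivAt (fun t => -((x - t) ^ (p+1) / (p+1).factorial) * gp t)
          (((x - t) ^ p / p.factorial) * gp t
            - ((x - t) ^ (p+1) / (p+1).factorial) * gq t) t := by
      intro t ht
      have ht1 : t ∈ Ioo (0:ℝ) 1 := ⟨ht.1, lt_of_lt_of_le ht.2 hx.2⟩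
      have hgpd : HasDerivAt gp (gq t) t := hasDerivAt_iter (p+1) f hf ht1
      have hpow : HasDerivAt (fun t => -((x - t) ^ (p+1) / ((p+1).factorial : ℝ)))
          ((x - t) ^ p / p.factorial) t := by
        have h1 : HasDerivAt (fun t : ℝ => (x - t)) (-1) t := (hasDerivAt_id t).const_sub x
        have h2 := h1.pow (p+1)
        have h3 := h2.const_mul (-(1/((p+1).factorial : ℝ)))
        convert h3 using 1
        · rfl
        · rfl
        · funext y; simp only [Pi.pow_apply]; ring
        · simp only [Nat.add_sub_cancel, Nat.factorial_succ]
          push_cast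
          field_simp
      have := hpow.mul hgpd
      convert this using 1
      · rfl
      · rfl
      · rfl
      ring
    have hcontH : ContinuousOn (fun t => -((x - t) ^ (p+1) / ((p+1).factorial : ℝ)) * gp t)
        (Icc 0 x) := by
      exact (Continuous.continuousOn
        ((((continuous_const.sub continuous_id').pow _).div_const _).neg)).mul (hgpc.mono hxI)
    have hintA : IntervalIntegrable (fun t => ((x - t) ^ p / (p.factorial : ℝ)) * gp t)
        volume 0 x := by
      apply ContinuousOn.intervalIntegrable
      rw [uIcc_of_le hx.1.le]
      exact (Continuous.continuousOn
        (((continuous_const.sub continuous_id').pow _).div_const _)).mul (hgpc.mono hxI)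
    have hintB : IntervalIntegrable (fun t => ((x - t) ^ (p+1) / ((p+1).factorial : ℝ)) * gq t)
        volume 0 x := by
      apply ContinuousOn.intervalIntegrable
      rw [uIcc_of_le hx.1.le]
      exact (Continuous.continuousOn
        (((continuous_const.sub continuous_id').pow _).div_const _)).mul (hgqc.mono hxI)
    have key := integral_eq_sub_of_hasDeriv_right_of_le hx.1.le hcontH
      (fun t ht => (hderiv t ht).hasDerivWithinAt) (hintA.sub hintB)
    rw [intervalIntegral.integral_sub hintA hintB] at key
    have hsub : (fun t => -((x - t) ^ (p+1) / ((p+1).factorial : ℝ)) * gp t) x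
        - (fun t => -((x - t) ^ (p+1) / ((p+1).factorial : ℝ)) * gp t) 0
        = x ^ (p+1) / ((p+1).factorial : ℝ) * gp 0 := by
      simp only [sub_self, sub_zero, zero_pow (Nat.succ_ne_zero p)]
      ring
    rw [hsub] at key
    have hIH := IH f (hf.of_le (by exact_mod_cast Nat.le_succ (p+1))) x hx
    rw [Finset.sum_range_succ]
    rw [← hgp] at hIH ⊢
    have : f x - ∑ k ∈ Finset.range (p+1),
        iteratedDerivWithin k f (Icc 0 1) 0 * x ^ k / k.factorial
        = ∫ t in (0:ℝ)..x, ((x - t) ^ p / p.factorial) * gp t := hIH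
    have hcomm : gp 0 * x ^ (p+1) / ((p+1).factorial : ℝ)
        = x ^ (p+1) / ((p+1).factorial : ℝ) * gp 0 := by ring
    linarith [this, key, hcomm]

lemma fubini_frac {a b : ℝ} (ha : 0 < a) (hb : 0 < b) (g : ℝ → ℝ) (hg : Continuous g)
    {x : ℝ} (hx : 0 < x) :
    (∫ s in (0:ℝ)..x, (x - s) ^ (a - 1) * ∫ t in (0:ℝ)..s, (s - t) ^ (b - 1) * g t)
      = (Real.Gamma a * Real.Gamma b / Real.Gamma (a + b))
          * ∫ t in (0:ℝ)..x, (x - t) ^ (a + b - 1) * g t := by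
  set μ : Measure ℝ := volume.restrict (Ioc 0 x) with hμ
  set S : Set (ℝ × ℝ) := {q : ℝ × ℝ | q.2 ∈ Ioc 0 q.1} with hS
  have hSm : MeasurableSet S :=
    (measurableSet_lt measurable_const measurable_snd).inter
      (measurableSet_le measurable_snd measurable_fst)
  set Φ : ℝ × ℝ → ℝ :=
    S.indicator (fun q => (x - q.1) ^ (a - 1) * ((q.1 - q.2) ^ (b - 1) * g q.2)) with hΦ
  have hμsing : ∀ y : ℝ, μ {y} = 0 := fun y => by
    rw [hμ, Measure.restrict_apply (measurableSet_singleton y)]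
    exact measure_mono_null inter_subset_left (measure_singleton y)
  -- measurability
  have hΦmeas : AEStronglyMeasurable Φ (μ.prod μ) := by
    set Ψ : ℝ × ℝ → ℝ := S.indicator (fun q =>
      Real.exp (Real.log (x - q.1) * (a - 1)) *
        (Real.exp (Real.log (q.1 - q.2) * (b - 1)) * g q.2)) with hΨ
    have hΨm : Measurable Ψ := by
      apply Measurable.indicator _ hSm
      exact ((Real.measurable_exp.comp ((Real.measurable_log.comp
          (measurable_const.sub measurable_fst)).mul measurable_const)).mul
        ((Real.measurable_exp.comp ((Real.measurable_log.comp
          (measurable_fst.sub measurable_snd)).mul measurable_const)).mul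
        (hg.measurable.comp measurable_snd)))
    have hnull : (μ.prod μ) ({q : ℝ × ℝ | q.1 = x} ∪ {q : ℝ × ℝ | q.1 = q.2}) = 0 := by
      apply measure_union_null
      · have he : {q : ℝ × ℝ | q.1 = x} = ({x} : Set ℝ) ×ˢ (univ : Set ℝ) := by
          ext ⟨s, t⟩; simp [eq_comm]
        rw [he, Measure.prod_prod, hμsing x, zero_mul]
      · have hdm : MeasurableSet {q : ℝ × ℝ | q.1 = q.2} :=
          measurableSet_eq_fun measurable_fst measurable_snd
        rw [Measure.measure_prod_null hdm]
        refine Filter.Eventually.of_forall fun s => ?_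
        refine measure_mono_null (fun t ht => ?_) (hμsing s)
        simpa [eq_comm] using ht
    have hmem : ∀ᵐ q ∂(μ.prod μ), q ∈ Ioc 0 x ×ˢ Ioc 0 x := by
      rw [hμ, Measure.prod_restrict]
      exact ae_restrict_mem (measurableSet_Ioc.prod measurableSet_Ioc)
    have hcompl : ∀ᵐ q ∂(μ.prod μ),
        q ∉ ({q : ℝ × ℝ | q.1 = x} ∪ {q : ℝ × ℝ | q.1 = q.2}) :=
      (measure_eq_zero_iff_ae_notMem).mp hnull
    have hae : Ψ =ᵐ[μ.prod μ] Φ := by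
      filter_upwards [hmem, hcompl] with q hq1 hq2
      simp only [Set.mem_union, not_or] at hq2
      by_cases hqS : q ∈ S
      · rw [hΨ, hΦ, indicator_of_mem hqS, indicator_of_mem hqS]
        have hts : q.2 ≤ q.1 := hqS.2
        have h1 : 0 < x - q.1 := sub_pos.2 (lt_of_le_of_ne hq1.1.2 hq2.1)
        have h2 : 0 < q.1 - q.2 := sub_pos.2 (lt_of_le_of_ne hts fun h => hq2.2 h.symm)
        rw [Real.rpow_def_of_pos h1, Real.rpow_def_of_pos h2]
      · rw [hΨ, hΦ, indicator_of_notMem hqS, indicator_of_notMem hqS]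
    exact hΨm.aestronglyMeasurable.congr hae
  -- bound on g
  obtain ⟨M, hM⟩ := (isCompact_Icc : IsCompact (Icc (0:ℝ) x)).exists_bound_of_continuousOn
    hg.continuousOn
  -- slice identification
  have hslice_eq0 : ∀ s t : ℝ, Φ (s, t)
      = (Ioc 0 s).indicator (fun t => (x - s) ^ (a-1) * ((s - t) ^ (b-1) * g t)) t := by
    intro s t
    by_cases h : t ∈ Ioc 0 s
    · rw [hΦ, indicator_of_mem (show (s,t) ∈ S from h), indicator_of_mem h]
    · rw [hΦ, indicator_of_notMem (show (s,t) ∉ S from h), indicator_of_notMem h]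
  have hslice_eq : ∀ s : ℝ, (fun t => Φ (s, t))
      = (Ioc 0 s).indicator (fun t => (x - s) ^ (a-1) * ((s - t) ^ (b-1) * g t)) :=
    fun s => funext (hslice_eq0 s)
  -- basic interval integrability
  have hbase : ∀ s : ℝ, IntervalIntegrable (fun t => (s - t) ^ (b-1) * g t) volume 0 s := by
    intro s
    have h0 : IntervalIntegrable (fun u : ℝ => u ^ (b-1)) volume 0 s :=
      intervalIntegral.intervalIntegrable_rpow' (by linarith)
    have h1 : IntervalIntegrable (fun t => (s - t) ^ (b-1)) volume 0 s := by
      simpa using (h0.comp_sub_left s).symm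
    exact h1.mul_continuousOn hg.continuousOn
  have hbase2 : ∀ s : ℝ, IntervalIntegrable (fun t => (s - t) ^ (b-1)) volume 0 s := by
    intro s
    have h0 : IntervalIntegrable (fun u : ℝ => u ^ (b-1)) volume 0 s :=
      intervalIntegral.intervalIntegrable_rpow' (by linarith)
    simpa using (h0.comp_sub_left s).symm
  -- slice integrability
  have hsliceInt : ∀ s ∈ Ioc 0 x, Integrable (fun t => Φ (s, t)) μ := by
    intro s hs
    rw [hslice_eq s, hμ, integrable_indicator_iff measurableSet_Ioc, IntegrableOn,
      Measure.restrict_restrict measurableSet_Ioc,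
      inter_eq_self_of_subset_left (Ioc_subset_Ioc_right hs.2)]
    exact (intervalIntegrable_iff_integrableOn_Ioc_of_le hs.1.le).mp ((hbase s).const_mul _)
  -- value of the simple rpow integral
  have hIoc_rpow : ∀ s : ℝ, 0 ≤ s → (∫ t in Ioc (0:ℝ) s, (s - t) ^ (b-1)) = s ^ b / b := by
    intro s hs
    rw [← intervalIntegral.integral_of_le hs,
      intervalIntegral.integral_comp_sub_left (fun u => u ^ (b-1)) s]
    simp only [sub_self, sub_zero]
    rw [integral_rpow (Or.inl (by linarith))]
    rw [Real.zero_rpow (by linarith : b - 1 + 1 ≠ 0), sub_add_cancel]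
    simp
  -- norm bound
  have hnormint : ∀ s ∈ Ioc 0 x,
      (∫ t, ‖Φ (s, t)‖ ∂μ) ≤ (x - s) ^ (a-1) * (M * (x ^ b / b)) := by
    intro s hs
    have hxs : (0:ℝ) ≤ x - s := sub_nonneg.2 hs.2
    have heq : (∫ t, ‖Φ (s, t)‖ ∂μ)
        = ∫ t in Ioc (0:ℝ) s, ‖(x - s) ^ (a-1) * ((s - t) ^ (b-1) * g t)‖ := by
      simp_rw [hslice_eq0 s, norm_indicator_eq_indicator_norm]
      rw [hμ, MeasureTheory.integral_indicator measurableSet_Ioc,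
        Measure.restrict_restrict measurableSet_Ioc,
        inter_eq_self_of_subset_left (Ioc_subset_Ioc_right hs.2)]
    rw [heq]
    have hle : (∫ t in Ioc (0:ℝ) s, ‖(x - s) ^ (a-1) * ((s - t) ^ (b-1) * g t)‖)
        ≤ ∫ t in Ioc (0:ℝ) s, (x - s) ^ (a-1) * ((s - t) ^ (b-1) * M) := by
      apply setIntegral_mono_on
      · exact (intervalIntegrable_iff_integrableOn_Ioc_of_le hs.1.le).mp
          ((hbase s).const_mul _).norm
      · exact (intervalIntegrable_iff_integrableOn_Ioc_of_le hs.1.le).mp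
          (((hbase2 s).mul_const M).const_mul _)
      · exact measurableSet_Ioc
      · intro t ht
        have hst : (0:ℝ) ≤ s - t := sub_nonneg.2 ht.2
        rw [Real.norm_eq_abs, abs_mul, abs_mul, abs_of_nonneg (Real.rpow_nonneg hxs _),
          abs_of_nonneg (Real.rpow_nonneg hst _)]
        have hgt : |g t| ≤ M := by
          have := hM t ⟨ht.1.le, le_trans ht.2 hs.2⟩
          simpa [Real.norm_eq_abs] using this
        gcongr
    refine le_trans hle ?_
    have heq2 : (∫ t in Ioc (0:ℝ) s, (x - s) ^ (a-1) * ((s - t) ^ (b-1) * M))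
        = ((x - s) ^ (a-1) * M) * (s ^ b / b) := by
      simp_rw [show ∀ t : ℝ, (x - s) ^ (a-1) * ((s - t) ^ (b-1) * M)
        = ((x - s) ^ (a-1) * M) * (s - t) ^ (b-1) from fun t => by ring]
      rw [MeasureTheory.integral_const_mul, hIoc_rpow s hs.1.le]
    rw [heq2]
    have hsx : s ^ b ≤ x ^ b := Real.rpow_le_rpow hs.1.le hs.2 hb.le
    have hM0 : (0:ℝ) ≤ M := le_trans (norm_nonneg (g 0)) (by simpa using hM 0 ⟨le_rfl, hx.le⟩)
    have hr0 : (0:ℝ) ≤ (x - s) ^ (a-1) := Real.rpow_nonneg hxs _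
    rw [mul_assoc]
    gcongr
  -- integrability of the norm integral
  have hφint : Integrable (fun s => (x - s) ^ (a-1) * (M * (x ^ b / b))) μ := by
    have h0 : IntervalIntegrable (fun u : ℝ => u ^ (a-1)) volume 0 x :=
      intervalIntegral.intervalIntegrable_rpow' (by linarith)
    have h1 : IntervalIntegrable (fun s => (x - s) ^ (a-1)) volume 0 x := by
      simpa using (h0.comp_sub_left x).symm
    exact (intervalIntegrable_iff_integrableOn_Ioc_of_le hx.le).mp (h1.mul_const _)
  have hnorm : Integrable (fun s => ∫ t, ‖Φ (s, t)‖ ∂μ) μ := by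
    apply Integrable.mono' hφint hΦmeas.norm.integral_prod_right'
    rw [hμ, ae_restrict_iff' measurableSet_Ioc]
    refine Filter.Eventually.of_forall fun s hs => ?_
    rw [Real.norm_of_nonneg (integral_nonneg fun t => norm_nonneg _)]
    exact hnormint s hs
  have hInt : Integrable Φ (μ.prod μ) := by
    rw [integrable_prod_iff hΦmeas]
    constructor
    · rw [hμ, ae_restrict_iff' measurableSet_Ioc]
      exact Filter.Eventually.of_forall hsliceInt
    · exact hnorm
  have hswap : (∫ s, (∫ t, Φ (s, t) ∂μ) ∂μ) = ∫ t, (∫ s, Φ (s, t) ∂μ) ∂μ :=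
    MeasureTheory.integral_integral_swap (f := fun s t => Φ (s, t)) hInt
  -- LHS identification
  have hLHS : (∫ s in (0:ℝ)..x, (x - s) ^ (a - 1) * ∫ t in (0:ℝ)..s, (s - t) ^ (b - 1) * g t)
      = ∫ s, (∫ t, Φ (s, t) ∂μ) ∂μ := by
    rw [hμ, intervalIntegral.integral_of_le hx.le]
    refine setIntegral_congr_fun measurableSet_Ioc fun s hs => ?_
    rw [hslice_eq s, MeasureTheory.integral_indicator measurableSet_Ioc,
      Measure.restrict_restrict measurableSet_Ioc,
      inter_eq_self_of_subset_left (Ioc_subset_Ioc_right hs.2),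
      ← intervalIntegral.integral_of_le hs.1.le, intervalIntegral.integral_const_mul]
  -- RHS identification
  have hptwise : ∀ t ∈ Ioo (0:ℝ) x, (∫ s, Φ (s, t) ∂μ)
      = (Real.Gamma a * Real.Gamma b / Real.Gamma (a + b)) * ((x - t) ^ (a+b-1) * g t) := by
    intro t ht
    have hsfun : (fun s => Φ (s, t))
        = (Ici t).indicator (fun s => (x - s) ^ (a-1) * ((s - t) ^ (b-1) * g t)) := by
      funext s
      by_cases h : t ≤ s
      · rw [hΦ, indicator_of_mem (show (s,t) ∈ S from ⟨ht.1, h⟩),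
          indicator_of_mem (mem_Ici.2 h)]
      · rw [hΦ, indicator_of_notMem (show (s,t) ∉ S from fun hc => h hc.2),
          indicator_of_notMem (by simpa using h)]
    rw [hsfun, hμ, MeasureTheory.integral_indicator measurableSet_Ici,
      Measure.restrict_restrict measurableSet_Ici]
    have hint : Ici t ∩ Ioc 0 x = Icc t x := by
      ext s
      simp only [mem_inter_iff, mem_Ici, mem_Ioc, mem_Icc]
      constructor
      · rintro ⟨h1, _, h3⟩; exact ⟨h1, h3⟩
      · rintro ⟨h1, h2⟩; exact ⟨h1, lt_of_lt_of_le ht.1 h1, h2⟩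
    rw [hint, integral_Icc_eq_integral_Ioc, ← intervalIntegral.integral_of_le ht.2.le]
    have hmc : (∫ s in t..x, (x - s) ^ (a-1) * ((s - t) ^ (b-1) * g t))
        = (∫ s in t..x, (x - s) ^ (a-1) * (s - t) ^ (b-1)) * g t := by
      rw [← intervalIntegral.integral_mul_const]
      exact intervalIntegral.integral_congr fun s _ => by ring
    rw [hmc, kernel_eval ha hb ht.2]
    ring
  have hRHS : (∫ t, (∫ s, Φ (s, t) ∂μ) ∂μ)
      = (Real.Gamma a * Real.Gamma b / Real.Gamma (a + b))
          * ∫ t in (0:ℝ)..x, (x - t) ^ (a+b-1) * g t := by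
    rw [hμ]
    rw [integral_Ioc_eq_integral_Ioo]
    rw [setIntegral_congr_fun measurableSet_Ioo fun t (ht : t ∈ Ioo (0:ℝ) x) => hptwise t ht]
    rw [← integral_Ioc_eq_integral_Ioo, ← intervalIntegral.integral_of_le hx.le,
      intervalIntegral.integral_const_mul]
  rw [hLHS, hswap, hRHS]


/-- The identity `J^α D^α f (x) = f(x) - ∑_{k=0}^{m-1} f^(k)(0) x^k / k!` for the Caputo
fractional derivative, where `m - 1 < α < m` and `f` is `m`-times continuously
differentiable on `[0,1]`. -/
theorem frac_integral_caputo_deriv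
    (m : ℕ) (hm : 1 ≤ m) (α : ℝ) (hα₁ : (m : ℝ) - 1 < α) (hα₂ : α < m)
    (f : ℝ → ℝ) (hf : ContDiffOn ℝ m f (Set.Icc 0 1)) :
    ∀ x ∈ Set.Ioc (0 : ℝ) 1,
      (1 / Real.Gamma α) * ∫ s in (0 : ℝ)..x, (x - s) ^ (α - 1) *
          ((1 / Real.Gamma ((m : ℝ) - α)) *
            ∫ t in (0 : ℝ)..s, (s - t) ^ ((m : ℝ) - α - 1) *
              iteratedDerivWithin m f (Set.Icc 0 1) t) =
        f x - ∑ k ∈ Finset.range m,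
          iteratedDerivWithin k f (Set.Icc 0 1) 0 * x ^ k / k.factorial := by
  intro x hx
  obtain ⟨p, rfl⟩ : ∃ p, m = p + 1 := ⟨m - 1, (Nat.succ_pred_eq_of_pos hm).symm⟩
  set b : ℝ := ((p+1 : ℕ) : ℝ) - α with hbdef
  have ha : 0 < α := by
    have : ((p+1 : ℕ) : ℝ) - 1 = (p : ℝ) := by push_cast; ring
    rw [this] at hα₁
    exact lt_of_le_of_lt (Nat.cast_nonneg p) hα₁
  have hb : 0 < b := by rw [hbdef]; linarith
  have hU : UniqueDiffOn ℝ (Icc (0:ℝ) 1) := uniqueDiffOn_Icc one_pos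
  have hgmc : ContinuousOn (iteratedDerivWithin (p+1) f (Icc 0 1)) (Icc (0:ℝ) 1) :=
    hf.continuousOn_iteratedDerivWithin le_rfl hU
  -- continuous extension of the top derivative
  set G : ℝ → ℝ := fun t => iteratedDerivWithin (p+1) f (Icc 0 1) (max 0 (min 1 t)) with hGdef
  have hproj : Continuous fun t : ℝ => max 0 (min 1 t) :=
    continuous_const.max (continuous_const.min continuous_id)
  have hprojmem : ∀ t : ℝ, max 0 (min 1 t) ∈ Icc (0:ℝ) 1 :=
    fun t => ⟨le_max_left _ _, max_le zero_le_one (min_le_left _ _)⟩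
  have hGcont : Continuous G := hgmc.comp_continuous hproj hprojmem
  have hGeq : ∀ t ∈ Icc (0:ℝ) 1, G t = iteratedDerivWithin (p+1) f (Icc 0 1) t := by
    intro t ht
    rw [hGdef]
    simp only [min_eq_right ht.2, max_eq_right ht.1]
  -- replace the derivative by its continuous extension in the inner integral
  have hgm : ∀ s ∈ Icc (0:ℝ) x,
      (∫ t in (0:ℝ)..s, (s - t) ^ (((p+1:ℕ):ℝ) - α - 1) *
          iteratedDerivWithin (p+1) f (Icc 0 1) t)
        = ∫ t in (0:ℝ)..s, (s - t) ^ (b - 1) * G t := by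
    intro s hs
    refine intervalIntegral.integral_congr fun t ht => ?_
    rw [uIcc_of_le hs.1] at ht
    rw [hGeq t ⟨ht.1, le_trans ht.2 (le_trans hs.2 hx.2)⟩, hbdef]
  have step1 : (∫ s in (0:ℝ)..x, (x - s) ^ (α - 1) *
          ((1 / Real.Gamma (((p+1:ℕ):ℝ) - α)) *
            ∫ t in (0:ℝ)..s, (s - t) ^ (((p+1:ℕ):ℝ) - α - 1) *
              iteratedDerivWithin (p+1) f (Icc 0 1) t))
      = ∫ s in (0:ℝ)..x, (1 / Real.Gamma b) * ((x - s) ^ (α - 1) *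
            ∫ t in (0:ℝ)..s, (s - t) ^ (b - 1) * G t) := by
    refine intervalIntegral.integral_congr fun s hs => ?_
    rw [uIcc_of_le hx.1.le] at hs
    rw [hgm s hs, hbdef]
    ring
  rw [step1, intervalIntegral.integral_const_mul, fubini_frac ha hb G hGcont hx.1]
  have hab : α + b = (p : ℝ) + 1 := by rw [hbdef]; push_cast; ring
  have hΓ : Real.Gamma (α + b) = (p.factorial : ℝ) := by
    rw [hab]; exact_mod_cast Real.Gamma_nat_eq_factorial p
  have hexp : α + b - 1 = (p : ℝ) := by rw [hab]; ring
  rw [hexp, hΓ]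
  have hfinal : (∫ t in (0:ℝ)..x, (x - t) ^ ((p:ℝ)) * G t)
      = ∫ t in (0:ℝ)..x, (x - t) ^ p * iteratedDerivWithin (p+1) f (Icc 0 1) t := by
    refine intervalIntegral.integral_congr fun t ht => ?_
    rw [uIcc_of_le hx.1.le] at ht
    rw [Real.rpow_natCast, hGeq t ⟨ht.1, le_trans ht.2 hx.2⟩]
  rw [hfinal]
  rw [taylor_integral p f hf x hx]
  have hpt : (∫ t in (0:ℝ)..x, ((x - t) ^ p / (p.factorial : ℝ)) *
        iteratedDerivWithin (p+1) f (Icc 0 1) t)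
      = (1 / (p.factorial : ℝ)) * ∫ t in (0:ℝ)..x,
          (x - t) ^ p * iteratedDerivWithin (p+1) f (Icc 0 1) t := by
    rw [← intervalIntegral.integral_const_mul]
    exact intervalIntegral.integral_congr fun t _ => by ring
  rw [hpt]
  have hΓa : Real.Gamma α ≠ 0 := (Real.Gamma_pos_of_pos ha).ne'
  have hΓb : Real.Gamma b ≠ 0 := (Real.Gamma_pos_of_pos hb).ne'
  have hfac : ((p.factorial : ℝ)) ≠ 0 := by positivity
  field_simp
end
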